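/- The identity element 1 of a unital Banach algebra A is an extreme point of the closed unit ball of A. -/

import Mathlib

open NormedSpace Filter Complex Set Nat Topology Asymptotics Pointwise

section Aux
variable {A : Type*} [NormedRing A] [NormedAlgebra ℂ A] [CompleteSpace A] [NormOneClass A]

lemma aux_norm_exp_le (x : A) : ‖exp x‖ ≤ Real.exp ‖x‖ := by
  rw [exp_eq_tsum ℂ]
  calc ‖∑' n : ℕ, (n !⁻¹ : ℂ) • x ^ n‖ ≤ ∑' n : ℕ, ‖(n !⁻¹ : ℂ) • x ^ n‖ :=
        norm_tsum_le_tsum_norm (norm_expSeries_summable' x)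
    _ ≤ ∑' n : ℕ, ‖x‖ ^ n / n ! := by
        refine Summable.tsum_le_tsum (fun n => ?_) (norm_expSeries_summable' x)
          (Real.summable_pow_div_factorial ‖x‖)
        rw [norm_smul, norm_inv, Complex.norm_natCast, div_eq_inv_mul]
        exact mul_le_mul_of_nonneg_left (norm_pow_le x n) (by positivity)
    _ = Real.exp ‖x‖ := by
        rw [Real.exp_eq_exp_ℝ, exp_eq_tsum_div]

lemma aux_exp_growth (a : A) {C ε : ℝ} (hC : 1 ≤ C) (hε : 0 < ε)
    (hpow : ∀ n, ‖a ^ n‖ ≤ C * ε ^ n) (z : ℂ) :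
    ‖exp (z • a)‖ ≤ C * Real.exp (ε * ‖z‖) := by
  rw [exp_eq_tsum ℂ]
  have hsum2 : Summable (fun n : ℕ => C * ((ε * ‖z‖) ^ n / n !)) :=
    (Real.summable_pow_div_factorial _).mul_left C
  calc ‖∑' n : ℕ, (n !⁻¹ : ℂ) • (z • a) ^ n‖ ≤ ∑' n : ℕ, ‖(n !⁻¹ : ℂ) • (z • a) ^ n‖ :=
        norm_tsum_le_tsum_norm (norm_expSeries_summable' _)
    _ ≤ ∑' n : ℕ, C * ((ε * ‖z‖) ^ n / n !) := by
        refine Summable.tsum_le_tsum (fun n => ?_) (norm_expSeries_summable' _) hsum2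
        rw [norm_smul, norm_inv, Complex.norm_natCast, smul_pow, norm_smul, norm_pow]
        have h1 : ‖a ^ n‖ ≤ C * ε ^ n := hpow n
        have h2 : (0:ℝ) ≤ ‖z‖ := norm_nonneg z
        have h3 : (0:ℝ) < (n ! : ℝ) := by positivity
        calc (n ! : ℝ)⁻¹ * (‖z‖ ^ n * ‖a ^ n‖)
            ≤ (n ! : ℝ)⁻¹ * (‖z‖ ^ n * (C * ε ^ n)) := by
              apply mul_le_mul_of_nonneg_left _ (by positivity)
              exact mul_le_mul_of_nonneg_left h1 (by positivity)
          _ = C * ((ε * ‖z‖) ^ n / n !) := by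
              rw [mul_pow]; field_simp
    _ = C * Real.exp (ε * ‖z‖) := by
        rw [tsum_mul_left, Real.exp_eq_exp_ℝ, exp_eq_tsum_div]

lemma aux_exp_le_one {a : A} (h1 : ‖1 + a‖ ≤ 1) {t : ℝ} (ht : 0 ≤ t) :
    ‖exp ((t : ℂ) • a)‖ ≤ 1 := by
  have hsplit : (t : ℂ) • a = (t : ℂ) • (1 + a) + (-(t : ℂ)) • 1 := by
    simp [smul_add]
  have hcomm : Commute ((t : ℂ) • (1 + a)) ((-(t : ℂ)) • (1:A)) := by
    exact ((Commute.one_right (1 + a)).smul_left _).smul_right _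
  rw [hsplit, exp_add_of_commute_of_mem_ball (𝕂 := ℂ) hcomm
    ((expSeries_radius_eq_top ℂ A).symm ▸ edist_lt_top _ _)
    ((expSeries_radius_eq_top ℂ A).symm ▸ edist_lt_top _ _)]
  have h2 : exp ((-(t:ℂ)) • (1:A)) = algebraMap ℂ A (Complex.exp (-(t:ℂ))) := by
    rw [← Algebra.algebraMap_eq_smul_one, ← algebraMap_exp_comm, Complex.exp_eq_exp_ℂ]
  calc ‖NormedSpace.exp ((t:ℂ) • (1 + a)) * NormedSpace.exp ((-(t:ℂ)) • (1:A))‖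
      ≤ ‖NormedSpace.exp ((t:ℂ) • (1 + a))‖ * ‖NormedSpace.exp ((-(t:ℂ)) • (1:A))‖ := norm_mul_le _ _
    _ ≤ Real.exp ‖(t:ℂ) • (1 + a)‖ * Real.exp (-t) := by
        refine mul_le_mul (aux_norm_exp_le _) ?_ (norm_nonneg _) (Real.exp_nonneg _)
        rw [h2, norm_algebraMap', Complex.norm_exp]
        simp
    _ ≤ Real.exp t * Real.exp (-t) := by
        refine mul_le_mul_of_nonneg_right (Real.exp_le_exp.2 ?_) (Real.exp_nonneg _)
        rw [norm_smul, Complex.norm_real, Real.norm_eq_abs, _root_.abs_of_nonneg ht]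
        calc t * ‖1 + a‖ ≤ t * 1 := mul_le_mul_of_nonneg_left h1 ht
          _ = t := mul_one t
    _ = 1 := by rw [← Real.exp_add]; simp

lemma aux_PL {f : ℂ → ℂ} (hd : Differentiable ℂ f)
    (hdecay : ∀ ε > (0:ℝ), ∃ C, 1 ≤ C ∧ ∀ z, ‖f z‖ ≤ C * Real.exp (ε * ‖z‖))
    (hreal : ∀ t : ℝ, ‖f (t : ℂ)‖ ≤ 1) (z : ℂ) : ‖f z‖ ≤ 1 := by
  have key : ∀ ε > (0:ℝ), ∀ σ : ℝ, |σ| = 1 → ∀ w : ℂ, 0 ≤ w.re →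
      ‖f ((σ:ℂ) * I * w)‖ ≤ Real.exp (ε * w.re) := by
    intro ε hε σ hσ w hw
    obtain ⟨C, hC1, hCb⟩ := hdecay (ε/2) (by positivity)
    set g : ℂ → ℂ := fun w => f ((σ:ℂ) * I * w) * Complex.exp (-(ε:ℂ) * w) with hgdef
    have habsIw : ∀ w : ℂ, ‖(σ:ℂ) * I * w‖ = ‖w‖ := by
      intro w; simp [norm_mul, hσ]
    have hg : ∀ w : ℂ, ‖g w‖
        = ‖f ((σ:ℂ) * I * w)‖ * Real.exp (-(ε * w.re)) := by
      intro w
      simp only [hgdef, norm_mul, Complex.norm_exp]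
      congr 2
      simp [Complex.mul_re]
    have hdg : Differentiable ℂ g :=
      (hd.comp (differentiable_id.const_mul _)).mul (differentiable_id.const_mul (-(ε:ℂ))).cexp
    have hmain : ‖g w‖ ≤ 1 := by
      refine PhragmenLindelof.right_half_plane_of_tendsto_zero_on_real
        hdg.diffContOnCl ?_ ?_ ?_ hw
      · refine ⟨1, one_lt_two, 2 * ε, IsBigO.of_bound C ?_⟩
        refine Eventually.of_forall fun w => ?_
        have h1 : ‖g w‖ ≤ C * Real.exp (2 * ε * ‖w‖) := by
          rw [hg]
          calc ‖f ((σ:ℂ) * I * w)‖ * Real.exp (-(ε * w.re))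
              ≤ (C * Real.exp (ε/2 * ‖w‖)) * Real.exp (ε * ‖w‖) := by
                refine mul_le_mul ?_ ?_ (Real.exp_nonneg _) (by positivity)
                · have := hCb ((σ:ℂ) * I * w); rwa [habsIw] at this
                · refine Real.exp_le_exp.2 ?_
                  have h2 : -w.re ≤ ‖w‖ :=
                    (neg_le_abs _).trans (Complex.abs_re_le_norm w)
                  nlinarith [norm_nonneg w]
            _ ≤ C * Real.exp (2 * ε * ‖w‖) := by
                rw [mul_assoc, ← Real.exp_add]
                refine mul_le_mul_of_nonneg_left (Real.exp_le_exp.2 ?_) (by linarith)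
                nlinarith [norm_nonneg w]
        calc ‖g w‖ = ‖g w‖ := rfl
          _ ≤ C * Real.exp (2 * ε * ‖w‖) := h1
          _ = C * ‖Real.exp (2 * ε * ‖w‖ ^ (1:ℝ))‖ := by
              rw [Real.rpow_one, Real.norm_eq_abs, _root_.abs_of_pos (Real.exp_pos _)]
      · have hbt : Tendsto (fun x : ℝ => -(ε/2) * x) atTop atBot :=
          tendsto_const_nhds.neg_mul_atTop (by linarith) tendsto_id
        have h0 : Tendsto (fun x : ℝ => C * Real.exp (-(ε/2) * x)) atTop (𝓝 0) := by
          simpa using (Real.tendsto_exp_atBot.comp hbt).const_mul C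
        refine squeeze_zero_norm' ?_ h0
        filter_upwards [eventually_ge_atTop (0:ℝ)] with x hx
        have : ‖g x‖ ≤ C * Real.exp (-(ε/2) * x) := by
          rw [hg]
          have h1 := hCb ((σ:ℂ) * I * (x:ℂ))
          rw [habsIw, Complex.norm_real, Real.norm_eq_abs, _root_.abs_of_nonneg hx] at h1
          calc ‖f ((σ:ℂ) * I * (x:ℂ))‖ * Real.exp (-(ε * (x:ℂ).re))
              ≤ (C * Real.exp (ε/2 * x)) * Real.exp (-(ε * x)) := by
                refine mul_le_mul h1 (Real.exp_le_exp.2 ?_) (Real.exp_nonneg _) (by positivity)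
                simp
            _ = C * Real.exp (-(ε/2) * x) := by
                rw [mul_assoc, ← Real.exp_add]; ring_nf
        exact this
      · intro x
        have e1 : (σ:ℂ) * I * ((x:ℂ) * I) = (((-(σ*x)):ℝ):ℂ) := by
          push_cast
          ring_nf
          rw [Complex.I_sq]
          ring
        have e2 : ‖Complex.exp (-(ε:ℂ) * ((x:ℂ) * I))‖ = 1 := by
          rw [Complex.norm_exp]
          have : (-(ε:ℂ) * ((x:ℂ) * I)).re = 0 := by simp [Complex.mul_re]
          rw [this, Real.exp_zero]
        calc ‖g ((x:ℂ) * I)‖ = ‖f ((σ:ℂ) * I * ((x:ℂ) * I))‖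
              * ‖Complex.exp (-(ε:ℂ) * ((x:ℂ) * I))‖ := by
              simp [hgdef, map_mul]
          _ ≤ 1 := by rw [e1, e2, mul_one]; exact hreal _
    -- unpack
    have : ‖g w‖ ≤ 1 := hmain
    rw [hg] at this
    have hx := Real.exp_pos (-(ε * w.re))
    calc ‖f ((σ:ℂ) * I * w)‖
        = ‖f ((σ:ℂ) * I * w)‖ * Real.exp (-(ε * w.re)) * Real.exp (ε * w.re) := by
          rw [mul_assoc _ (Real.exp _) (Real.exp _), ← Real.exp_add]; simp
      _ ≤ 1 * Real.exp (ε * w.re) := mul_le_mul_of_nonneg_right this (Real.exp_nonneg _)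
      _ = Real.exp (ε * w.re) := one_mul _
  have step : ∀ ε > (0:ℝ), ‖f z‖ ≤ Real.exp (ε * |z.im|) := by
    intro ε hε
    rcases le_total 0 z.im with him | him
    · have e1 : ((1:ℝ):ℂ) * I * (-I * z) = z := by
        push_cast; ring_nf; rw [Complex.I_sq]; ring
      have e2 : (-I * z).re = z.im := by simp
      have := key ε hε 1 (by norm_num) (-I * z) (by rw [e2]; exact him)
      rw [e1, e2] at this
      rwa [_root_.abs_of_nonneg him]
    · have e1 : ((-1:ℝ):ℂ) * I * (I * z) = z := by
        push_cast; ring_nf; rw [Complex.I_sq]; ring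
      have e2 : (I * z).re = -z.im := by simp
      have := key ε hε (-1) (by norm_num) (I * z) (by rw [e2]; linarith)
      rw [e1, e2] at this
      rwa [_root_.abs_of_nonpos him]
  have ht : Tendsto (fun ε : ℝ => Real.exp (ε * |z.im|)) (𝓝[>] (0:ℝ)) (𝓝 1) := by
    have hc : Continuous fun ε : ℝ => Real.exp (ε * |z.im|) := by continuity
    have := (hc.tendsto 0).mono_left (nhdsWithin_le_nhds (s := Set.Ioi (0:ℝ)))
    simpa using this
  refine ge_of_tendsto ht ?_
  filter_upwards [self_mem_nhdsWithin] with ε hε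
  exact step ε hε

end Aux

theorem stmt_1 {A : Type*} [NormedRing A] [NormedAlgebra ℂ A] [CompleteSpace A]
    [NormOneClass A]
    (u v : A) (hu : ‖u‖ ≤ 1) (hv : ‖v‖ ≤ 1)
    (h : (1 : A) = (2⁻¹ : ℂ) • (u + v)) :
    u = 1 ∧ v = 1 := by
  have h2 : (2:ℂ) • (1:A) = (2:ℂ) • ((2⁻¹:ℂ) • (u + v)) := congrArg _ h
  rw [smul_smul] at h2
  norm_num at h2
  -- h2 : (2:ℂ) • (1:A) = u + v  (hopefully)
  have huv : u + v = 1 + 1 := by rw [← h2, two_smul]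
  set a := u - 1 with ha
  have e : 1 + a = u := by rw [ha]; abel
  have hv2 : 1 + -a = v := by
    have hv3 : v = 1 + 1 - u := by
      rw [← huv]; abel
    rw [hv3, ha]; abel
  have hu1 : ‖1 + a‖ ≤ 1 := by rwa [e]
  have hv1 : ‖1 + -a‖ ≤ 1 := by rwa [hv2]
  -- spectrum of a is {0}
  have hspec : spectrum ℂ a ⊆ {0} := by
    intro z hz
    have h1 : (1:ℂ) + z ∈ spectrum ℂ u := by
      have hmem : (1:ℂ) + z ∈ ({1} : Set ℂ) + spectrum ℂ a :=
        Set.add_mem_add rfl hz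
      rw [spectrum.singleton_add_eq] at hmem
      rw [← e]
      simpa using hmem
    have h2' : (1:ℂ) - z ∈ spectrum ℂ v := by
      have hmem : (1:ℂ) - z ∈ ({1} : Set ℂ) - spectrum ℂ a :=
        Set.sub_mem_sub rfl hz
      rw [spectrum.singleton_sub_eq] at hmem
      rw [← hv2]
      simpa [sub_eq_add_neg] using hmem
    have b1 : ‖(1:ℂ) + z‖ ≤ 1 := by
      have := spectrum.subset_closedBall_norm u h1
      rw [mem_closedBall_zero_iff] at this
      exact this.trans hu
    have b2 : ‖(1:ℂ) - z‖ ≤ 1 := by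
      have := spectrum.subset_closedBall_norm v h2'
      rw [mem_closedBall_zero_iff] at this
      exact this.trans hv
    have n1 : Complex.normSq (1 + z) ≤ 1 := by
      rw [← Complex.sq_norm]
      have h0 := norm_nonneg (1+z)
      nlinarith
    have n2 : Complex.normSq (1 - z) ≤ 1 := by
      rw [← Complex.sq_norm]
      have h0 := norm_nonneg (1-z)
      nlinarith
    simp only [Complex.normSq_apply, Complex.add_re, Complex.add_im, Complex.sub_re,
      Complex.sub_im, Complex.one_re, Complex.one_im] at n1 n2
    have hz0 : z = 0 := by
      apply Complex.ext <;> simp only [Complex.zero_re, Complex.zero_im] <;> nlinarith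
    exact hz0
  have hrad : spectralRadius ℂ a = 0 := by
    refine le_antisymm ?_ (by positivity)
    rw [spectralRadius]
    refine iSup₂_le fun k hk => ?_
    have : k = 0 := hspec hk
    simp [this]
  -- power bound
  have hq : ∀ ε > (0:ℝ), ∃ C, 1 ≤ C ∧ ∀ n : ℕ, ‖a ^ n‖ ≤ C * ε ^ n := by
    intro ε hε
    have hg := spectrum.pow_norm_pow_one_div_tendsto_nhds_spectralRadius a
    rw [hrad] at hg
    have hlt : ∀ᶠ n : ℕ in Filter.atTop,
        ENNReal.ofReal (‖a ^ n‖ ^ (1/(n:ℝ))) < ENNReal.ofReal ε :=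
      hg.eventually_lt_const (ENNReal.ofReal_pos.2 hε)
    obtain ⟨N, hN⟩ := Filter.eventually_atTop.1 hlt
    set S : ℝ := ∑ k ∈ Finset.range (N+1), ‖a ^ k‖ / ε ^ k with hS
    have hS0 : 0 ≤ S := Finset.sum_nonneg fun k _ => by positivity
    refine ⟨1 + S, by linarith, fun n => ?_⟩
    rcases lt_or_ge n (N+1) with hn | hn
    · have hpos : (0:ℝ) < ε ^ n := by positivity
      have hterm : ‖a ^ n‖ / ε ^ n ≤ S :=
        Finset.single_le_sum (f := fun k => ‖a ^ k‖ / ε ^ k)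
          (fun k _ => by positivity) (Finset.mem_range.2 hn)
      have h3 : ‖a ^ n‖ ≤ S * ε ^ n := (div_le_iff₀ hpos).1 hterm
      nlinarith
    · have h1 := hN n (le_trans (Nat.le_succ N) hn)
      have hn1 : 1 ≤ n := le_trans (Nat.succ_le_succ (Nat.zero_le N)) hn
      have h2' : ‖a ^ n‖ ^ (1/(n:ℝ)) < ε := by
        rwa [ENNReal.ofReal_lt_ofReal_iff hε] at h1
      have hne : ((n:ℝ)) ≠ 0 := by positivity
      have h3 : ‖a ^ n‖ ≤ ε ^ n := by
        have hmono := Real.rpow_le_rpow (Real.rpow_nonneg (norm_nonneg _) _)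
          h2'.le (Nat.cast_nonneg n)
        rw [← Real.rpow_mul (norm_nonneg _), one_div, inv_mul_cancel₀ hne, Real.rpow_one,
          Real.rpow_natCast] at hmono
        exact hmono
      have h4 : (0:ℝ) ≤ ε ^ n := by positivity
      nlinarith
  -- exp bound on the real line
  have hexp1 : ∀ t : ℝ, ‖NormedSpace.exp ((t:ℂ) • a)‖ ≤ 1 := by
    intro t
    rcases le_total 0 t with ht | ht
    · exact aux_exp_le_one hu1 ht
    · have := aux_exp_le_one hv1 (neg_nonneg.2 ht)
      have e3 : (((-t):ℝ):ℂ) • (-a) = (t:ℂ) • a := by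
        push_cast
        rw [neg_smul, smul_neg, neg_neg]
      rwa [e3] at this
  -- all dual functionals are constant on the exp curve
  have hdiff : Differentiable ℂ (fun w : ℂ => NormedSpace.exp (w • a)) :=
    fun w => (hasDerivAt_exp_smul_const a w).differentiableAt
  have hconst : ∀ w : ℂ, NormedSpace.exp (w • a) = 1 := by
    have hkey : ∀ phi : StrongDual ℂ A, ‖phi‖ ≤ 1 → ∀ w : ℂ,
        phi (NormedSpace.exp (w • a)) = phi 1 := by
      intro phi hphi
      set F : ℂ → ℂ := fun w => phi (NormedSpace.exp (w • a)) with hF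
      have hdF : Differentiable ℂ F := phi.differentiable.comp hdiff
      have hbF : ∀ z, ‖F z‖ ≤ 1 := by
        refine aux_PL hdF ?_ ?_
        · intro ε hε
          obtain ⟨C, hC1, hCp⟩ := hq ε hε
          refine ⟨C, hC1, fun z => ?_⟩
          calc ‖F z‖ = ‖phi (NormedSpace.exp (z • a))‖ := rfl
            _ ≤ ‖phi‖ * ‖NormedSpace.exp (z • a)‖ := phi.le_opNorm _
            _ ≤ 1 * (C * Real.exp (ε * ‖z‖)) := by
                refine mul_le_mul hphi (aux_exp_growth a hC1 hε hCp z) (norm_nonneg _) zero_le_one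
            _ = C * Real.exp (ε * ‖z‖) := one_mul _
        · intro t
          calc ‖F (t:ℂ)‖ = ‖phi (NormedSpace.exp ((t:ℂ) • a))‖ := rfl
            _ ≤ ‖phi‖ * ‖NormedSpace.exp ((t:ℂ) • a)‖ := phi.le_opNorm _
            _ ≤ 1 * 1 := mul_le_mul hphi (hexp1 t) (norm_nonneg _) zero_le_one
            _ = 1 := one_mul _
      have hrange : Bornology.IsBounded (Set.range F) := by
        refine isBounded_iff_forall_norm_le.2 ⟨1, ?_⟩
        rintro x ⟨w, rfl⟩
        exact hbF w
      intro w
      have h0 := hdF.apply_eq_apply_of_bounded hrange w 0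
      simpa [hF, NormedSpace.exp_zero] using h0
    intro w
    rw [NormedSpace.eq_iff_forall_dual_eq (𝕜 := ℂ)]
    intro psi
    by_cases hpsi : psi = 0
    · simp [hpsi]
    · have hn : ‖psi‖ ≠ 0 := norm_ne_zero_iff.2 hpsi
      have hc : (‖psi‖⁻¹ : ℝ) ≠ 0 := inv_ne_zero hn
      have hnorm : ‖(‖psi‖⁻¹ : ℝ) • psi‖ ≤ 1 := by
        rw [norm_smul, norm_inv, norm_norm, inv_mul_cancel₀ hn]
      have := hkey ((‖psi‖⁻¹ : ℝ) • psi) hnorm w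
      simp only [ContinuousLinearMap.smul_apply] at this
      exact smul_right_injective ℂ hc this
  have ha0 : a = 0 := by
    have h1 : HasDerivAt (fun w : ℂ => NormedSpace.exp (w • a))
        (NormedSpace.exp ((0:ℂ) • a) * a) 0 := hasDerivAt_exp_smul_const a 0
    have h2' : (fun w : ℂ => NormedSpace.exp (w • a)) = fun _ => (1:A) := funext hconst
    rw [h2'] at h1
    have h3 : HasDerivAt (fun _ : ℂ => (1:A)) 0 0 := hasDerivAt_const _ _
    have h4 := h1.unique h3
    rwa [zero_smul, NormedSpace.exp_zero, one_mul] at h4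
  constructor
  · rw [← e, ha0, add_zero]
  · rw [← hv2, ha0, neg_zero, add_zero]
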